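/- Let G be a connected undirected graph on [n], let P be an all-pairs set of paths for G, and let L≥2 be an integer. For every x∈{1}×[n]^L, the function f_x has exactly one local minimum, namely the vertex x_{L+1}. -/

import Mathlib

open Finset

/-- An all-pairs set of simple paths in `G`, with `P^{u,u}` the trivial path. -/
structure PathSystem {n : ℕ} (G : SimpleGraph (Fin n)) where
  path : ∀ u v : Fin n, G.Walk u v
  isPath : ∀ u v : Fin n, (path u v).IsPath
  diag : ∀ u : Fin n, path u u = SimpleGraph.Walk.nil

/-- Vertex congestion of a path system: max over vertices of total occurrences. -/
def PathSystem.congestion {n : ℕ} {G : SimpleGraph (Fin n)} (P : PathSystem G) : ℕ :=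
  Finset.univ.sup fun w : Fin n =>
    ∑ u : Fin n, ∑ v : Fin n, (P.path u v).support.count w

/-- Support of the `i`-th quasi-segment `P^{x_i, x_{i+1}}` (0-based). -/
def segSupport {n L : ℕ} {G : SimpleGraph (Fin n)} (P : PathSystem G)
    (x : Fin (L + 1) → Fin n) (i : ℕ) : List (Fin n) :=
  (P.path (x ⟨min i L, by omega⟩) (x ⟨min (i + 1) L, by omega⟩)).support

/-- Support of the staircase walk `P^{x_j,x_{j+1}} ∘ ⋯ ∘ P^{x_{L-1},x_L}` (0-based `j`). -/
def stairSupportFrom {n L : ℕ} {G : SimpleGraph (Fin n)} (P : PathSystem G)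
    (x : Fin (L + 1) → Fin n) (j : ℕ) : List (Fin n) :=
  x ⟨min j L, by omega⟩ ::
    (List.ofFn fun k : Fin (L - j) =>
      (P.path (x ⟨j + k, by have := k.isLt; omega⟩)
              (x ⟨j + k + 1, by have := k.isLt; omega⟩)).support.tail).flatten

/-- `Tail(j, S_x)` (0-based `j`): the staircase from `x_j` with the first occurrence
of `x_j` removed. -/
def tailSupport {n L : ℕ} {G : SimpleGraph (Fin n)} (P : PathSystem G)
    (x : Fin (L + 1) → Fin n) (j : ℕ) : List (Fin n) :=
  (stairSupportFrom P x j).erase (x ⟨min j L, by omega⟩)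

/-- Largest 0-based index `i` such that the prefixes `x_0 … x_i` and `y_0 … y_i` agree
(`J_{x,y} - 1` in 1-based notation). -/
def J0 {n L : ℕ} (x y : Fin (L + 1) → Fin n) : ℕ :=
  (Finset.univ.filter fun i : Fin (L + 1) => ∀ k ≤ i, x k = y k).sup fun i => (i : ℕ)

/-- `q_v(u)`: the number of paths in `P` starting at `u` that contain `v`. -/
def qcount {n : ℕ} {G : SimpleGraph (Fin n)} (P : PathSystem G) (v u : Fin n) : ℕ :=
  (Finset.univ.filter fun w : Fin n => v ∈ (P.path u w).support).card

/-- Largest 0-based index `i` with `v ∈ P^{x_i,x_{i+1}}`. -/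
def maxSegIdx {n L : ℕ} {G : SimpleGraph (Fin n)} (P : PathSystem G)
    (x : Fin (L + 1) → Fin n) (v : Fin n) : ℕ :=
  ((Finset.range L).filter fun i => v ∈ segSupport P x i).sup id

/-- The function `f_x`. -/
noncomputable def fS {n L : ℕ} {G : SimpleGraph (Fin n)} (P : PathSystem G)
    (x : Fin (L + 1) → Fin n) (v : Fin n) : ℤ :=
  if v ∈ stairSupportFrom P x 0 then
    -(((maxSegIdx P x v : ℤ) + 1) * n) - (((segSupport P x (maxSegIdx P x v)).idxOf v : ℤ) + 1)
  else (G.dist v (x 0) : ℤ)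

/-- The function `g_{x,b}`. -/
noncomputable def gS {n L : ℕ} {G : SimpleGraph (Fin n)} (P : PathSystem G)
    (x : Fin (L + 1) → Fin n) (b : ℤ) (v : Fin n) : ℤ × ℤ :=
  if v = x (Fin.last L) then (fS P x v, b) else (fS P x v, -1)

/-- The relation `r*`. -/
noncomputable def rstar {n L : ℕ} (x y : Fin (L + 1) → Fin n) (b1 b2 : ℤ) : ℝ :=
  if b1 = b2 ∨ ¬ Function.Injective x ∨ ¬ Function.Injective y then 0
  else (n : ℝ) ^ (J0 x y + 1)

/-- The relation `r`. -/
noncomputable def rrel {n L : ℕ} (x y : Fin (L + 1) → Fin n) (b1 b2 : ℤ) : ℝ :=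
  if x = y then 0 else rstar x y b1 b2

/-- The relation `r'`. -/
noncomputable def rprime {n L : ℕ} {G : SimpleGraph (Fin n)} (P : PathSystem G) (g : ℕ)
    (x y : Fin (L + 1) → Fin n) (b1 b2 : ℤ) (v : Fin n) : ℝ :=
  if gS P x b1 v = gS P y b2 v ∨ b1 = b2 then 0
  else if v ∈ tailSupport P x (J0 x y) ∧ v ∉ tailSupport P y (J0 x y) then
    rrel x y b1 b2 * g / (n : ℝ) ^ (1.5 : ℝ)
  else if v ∈ tailSupport P y (J0 x y) ∧ v ∉ tailSupport P x (J0 x y) then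
    rrel x y b1 b2 * (n : ℝ) ^ (1.5 : ℝ) / g
  else rrel x y b1 b2

/-- The vertex congestion of the graph `G`. -/
noncomputable def vertexCongestion {n : ℕ} (G : SimpleGraph (Fin n)) : ℕ :=
  sInf {c | ∃ P : PathSystem G, P.congestion = c}

/-- The number of cut edges `|E(S, V∖S)|`. -/
def cutEdges {n : ℕ} (G : SimpleGraph (Fin n)) [DecidableRel G.Adj]
    (S : Finset (Fin n)) : ℕ :=
  ((S ×ˢ Sᶜ).filter fun p => G.Adj p.1 p.2).card



section Aux

variable {n L : ℕ} {G : SimpleGraph (Fin n)} (P : PathSystem G) (x : Fin (L + 1) → Fin n)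

lemma xcongr {i j : ℕ} (hi : i < L + 1) (hj : j < L + 1) (h : i = j) :
    x ⟨i, hi⟩ = x ⟨j, hj⟩ := by subst h; rfl

lemma seg_eq {i : ℕ} (hi : i < L) (h1 : i < L + 1) (h2 : i + 1 < L + 1) :
    segSupport P x i = (P.path (x ⟨i, h1⟩) (x ⟨i + 1, h2⟩)).support := by
  unfold segSupport
  rw [xcongr x (h := show min i L = i by omega), xcongr x (h := show min (i+1) L = i+1 by omega)]

lemma seg_nodup {i : ℕ} (hi : i < L) : (segSupport P x i).Nodup := by
  rw [seg_eq P x hi (by omega) (by omega)]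
  exact (P.isPath _ _).support_nodup

lemma seg_len_le {i : ℕ} (hi : i < L) : (segSupport P x i).length ≤ n := by
  simpa using (seg_nodup P x hi).length_le_card

lemma start_mem_seg {i : ℕ} (hi : i < L) (h1 : i < L + 1) :
    x ⟨i, h1⟩ ∈ segSupport P x i := by
  rw [seg_eq P x hi h1 (by omega)]
  exact SimpleGraph.Walk.start_mem_support _

lemma end_mem_seg {i : ℕ} (hi : i < L) (h2 : i + 1 < L + 1) :
    x ⟨i + 1, h2⟩ ∈ segSupport P x i := by
  rw [seg_eq P x hi (by omega) h2]
  exact SimpleGraph.Walk.end_mem_support _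

lemma mem_stair_iff (hL0 : 0 < L) {v : Fin n} :
    v ∈ stairSupportFrom P x 0 ↔ ∃ i < L, v ∈ segSupport P x i := by
  constructor
  · intro hv
    unfold stairSupportFrom at hv
    rcases List.mem_cons.mp hv with h | h
    · refine ⟨0, hL0, ?_⟩
      rw [seg_eq P x (i := 0) (by omega) (by omega) (by omega)]
      have hx : x ⟨min 0 L, by omega⟩ = x ⟨0, by omega⟩ := xcongr x _ (by omega) (by omega)
      rw [h, hx]
      exact SimpleGraph.Walk.start_mem_support _
    · rw [List.mem_flatten] at h
      obtain ⟨l, hl, hvl⟩ := h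
      rw [List.mem_ofFn] at hl
      obtain ⟨k, rfl⟩ := hl
      refine ⟨k, by have := k.isLt; omega, ?_⟩
      rw [seg_eq P x (by have := k.isLt; omega) (by have := k.isLt; omega)
        (by have := k.isLt; omega)]
      rw [xcongr x (hj := by have := k.isLt; omega) (h := show 0 + (k : ℕ) = (k : ℕ) by omega),
        xcongr x (hj := by have := k.isLt; omega) (h := show 0 + (k : ℕ) + 1 = (k : ℕ) + 1 by omega)] at hvl
      exact List.mem_of_mem_tail hvl
  · rintro ⟨i, hi, hv⟩
    induction i using Nat.strong_induction_on with
    | _ i IH =>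
      rw [seg_eq P x hi (by omega) (by omega)] at hv
      set p := P.path (x ⟨i, by omega⟩) (x ⟨i + 1, by omega⟩) with hp
      rcases List.mem_cons.mp (by rwa [← p.support_eq_cons] : v ∈ _ :: p.support.tail)
        with h | h
      · subst h
        rcases Nat.eq_zero_or_pos i with rfl | hipos
        · unfold stairSupportFrom
          rw [xcongr x (hj := by omega) (h := show min 0 L = 0 by omega)]
          exact List.mem_cons_self
        · have : x ⟨i, by omega⟩ ∈ segSupport P x (i - 1) := by
            have := end_mem_seg P x (i := i - 1) (by omega) (by omega)
            rwa [xcongr x (hj := by omega) (h := show i - 1 + 1 = i by omega)] at this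
          exact IH (i - 1) (by omega) (by omega) this
      · unfold stairSupportFrom
        refine List.mem_cons_of_mem _ (List.mem_flatten.mpr ⟨p.support.tail, ?_, h⟩)
        rw [List.mem_ofFn]
        refine ⟨⟨i, by omega⟩, ?_⟩
        show (P.path (x ⟨0 + i, by omega⟩) (x ⟨0 + i + 1, by omega⟩)).support.tail = _
        rw [xcongr x (hj := by omega) (h := show 0 + i = i by omega),
          xcongr x (hj := by omega) (h := show 0 + i + 1 = i + 1 by omega), hp]

lemma maxSegIdx_spec {v : Fin n} (hv : v ∈ stairSupportFrom P x 0) (hL : 0 < L) :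
    maxSegIdx P x v < L ∧ v ∈ segSupport P x (maxSegIdx P x v) := by
  obtain ⟨i, hi, hvi⟩ := (mem_stair_iff P x hL).mp hv
  have hne : ((Finset.range L).filter fun j => v ∈ segSupport P x j).Nonempty :=
    ⟨i, Finset.mem_filter.mpr ⟨Finset.mem_range.mpr hi, hvi⟩⟩
  obtain ⟨b, hb, hsup⟩ := Finset.exists_mem_eq_sup _ hne id
  have heq : maxSegIdx P x v = b := hsup
  rw [heq]
  have := Finset.mem_filter.mp hb
  exact ⟨Finset.mem_range.mp this.1, this.2⟩

lemma le_maxSegIdx {v : Fin n} {i : ℕ} (hi : i < L) (h : v ∈ segSupport P x i) :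
    i ≤ maxSegIdx P x v :=
  Finset.le_sup (f := id) (Finset.mem_filter.mpr ⟨Finset.mem_range.mpr hi, h⟩)

lemma fS_of_mem {v : Fin n} (hv : v ∈ stairSupportFrom P x 0) :
    fS P x v = -(((maxSegIdx P x v : ℤ) + 1) * n)
      - (((segSupport P x (maxSegIdx P x v)).idxOf v : ℤ) + 1) := by
  rw [fS, if_pos hv]

lemma fS_of_not_mem {v : Fin n} (hv : v ∉ stairSupportFrom P x 0) :
    fS P x v = (G.dist v (x 0) : ℤ) := by
  rw [fS, if_neg hv]

lemma indexOf_lt_len {v : Fin n} {i : ℕ} (hi : i < L) (h : v ∈ segSupport P x i) :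
    (segSupport P x i).idxOf v < (segSupport P x i).length :=
  List.idxOf_lt_length_iff.mpr h

lemma walk_next {a b : Fin n} (w : G.Walk a b) (hwp : w.IsPath) {v : Fin n}
    (hv : v ∈ w.support) (hlast : v ≠ b) :
    ∃ u, G.Adj v u ∧ u ∈ w.support ∧
      w.support.idxOf u = w.support.idxOf v + 1 := by
  have hnd := hwp.support_nodup
  have hjlt : w.support.idxOf v < w.support.length := List.idxOf_lt_length_iff.mpr hv
  have hgetv : w.support.get ⟨_, hjlt⟩ = v := List.idxOf_get hjlt
  have hne : w.support.idxOf v ≠ w.support.length - 1 := by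
    intro heq
    apply hlast
    have hgl := w.getLast_support
    rw [List.getLast_eq_getElem] at hgl
    have h' : w.support.length - 1 < w.support.length := by omega
    have hv2 : w.support.get ⟨_, hjlt⟩ = w.support.get ⟨_, h'⟩ := by
      congr 1
      exact Fin.mk_eq_mk.mpr heq
    rw [hgetv] at hv2
    rw [hv2]
    simpa using hgl
  have hlen : 0 < w.support.length := List.length_pos_iff.mpr w.support_ne_nil
  have hj1 : w.support.idxOf v + 1 < w.support.length := by omega
  refine ⟨w.support.get ⟨_, hj1⟩, ?_, List.get_mem _ _, ?_⟩
  · have hchain := w.isChain_adj_support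
    have := List.isChain_iff_getElem.mp hchain (w.support.idxOf v) (by omega)
    have hg' : w.support[w.support.idxOf v] = v := hgetv
    rw [hg'] at this; exact this
  · have := List.Nodup.idxOf_getElem hnd (w.support.idxOf v + 1) hj1
    simpa [List.get_eq_getElem] using this

lemma exists_next {v : Fin n} {i : ℕ} (hi : i < L) (hv : v ∈ segSupport P x i)
    (hlast : v ≠ x ⟨i + 1, by omega⟩) :
    ∃ u, G.Adj v u ∧ u ∈ segSupport P x i ∧
      (segSupport P x i).idxOf u = (segSupport P x i).idxOf v + 1 := by
  rw [seg_eq P x hi (by omega) (by omega)] at hv ⊢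
  exact walk_next _ (P.isPath _ _) hv hlast

lemma walk_indexOf_last {a b : Fin n} (w : G.Walk a b) (hwp : w.IsPath) :
    w.support.idxOf b = w.support.length - 1 := by
  have hgl := w.getLast_support
  have hlen : 0 < w.support.length := List.length_pos_iff.mpr w.support_ne_nil
  rw [List.getLast_eq_getElem] at hgl
  have h2 := List.Nodup.idxOf_getElem hwp.support_nodup (w.support.length - 1) (by omega)
  rw [hgl] at h2
  exact h2

lemma x0_mem_stair : x 0 ∈ stairSupportFrom P x 0 := by
  unfold stairSupportFrom
  have hx : x ⟨min 0 L, by omega⟩ = x 0 := by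
    have : (⟨min 0 L, by omega⟩ : Fin (L + 1)) = 0 := by
      ext; simp
    rw [this]
  rw [hx]
  exact List.mem_cons_self

end Aux

theorem stmt7 {n L : ℕ} (hn : 2 ≤ n) (hL : 2 ≤ L)
    (G : SimpleGraph (Fin n)) (hG : G.Connected) (P : PathSystem G)
    (x : Fin (L + 1) → Fin n) (hx1 : x 0 = ⟨0, by omega⟩) :
    ∀ v : Fin n, (∀ u : Fin n, G.Adj u v → fS P x v ≤ fS P x u) ↔ v = x (Fin.last L) := by
  have hL0 : 0 < L := by omega
  have hnZ : (2 : ℤ) ≤ (n : ℤ) := by exact_mod_cast hn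
  intro v
  constructor
  · intro hmin
    by_contra hne
    by_cases hv : v ∈ stairSupportFrom P x 0
    · obtain ⟨hiL, hvseg⟩ := maxSegIdx_spec P x hv hL0
      have hvlast : v ≠ x ⟨maxSegIdx P x v + 1, by omega⟩ := by
        intro heq
        rcases Nat.lt_or_ge (maxSegIdx P x v + 1) L with h1 | h1
        · have hsm := le_maxSegIdx P x h1 (start_mem_seg P x (i := maxSegIdx P x v + 1) h1 (by omega))
          rw [← heq] at hsm
          omega
        · apply hne
          rw [heq]
          exact xcongr x _ _ (by omega)
      obtain ⟨u, hadj, huseg, hidx⟩ := exists_next P x hiL hvseg hvlast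
      have hle := hmin u hadj.symm
      have hustair : u ∈ stairSupportFrom P x 0 :=
        (mem_stair_iff P x hL0).mpr ⟨maxSegIdx P x v, hiL, huseg⟩
      have hiu : maxSegIdx P x v ≤ maxSegIdx P x u := le_maxSegIdx P x hiL huseg
      obtain ⟨hiuL, huseg'⟩ := maxSegIdx_spec P x hustair hL0
      rw [fS_of_mem P x hv, fS_of_mem P x hustair] at hle
      rcases eq_or_lt_of_le hiu with hEq | hLt
      · rw [← hEq] at hle
        have hidx' : (((segSupport P x (maxSegIdx P x v)).idxOf u : ℤ))
            = ((segSupport P x (maxSegIdx P x v)).idxOf v : ℤ) + 1 := by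
          exact_mod_cast congrArg (Nat.cast (R := ℤ)) hidx
        linarith
      · have hjv : ((segSupport P x (maxSegIdx P x v)).idxOf v : ℤ) + 1 ≤ n := by
          have h1 := indexOf_lt_len P x hiL hvseg
          have h2 := seg_len_le P x hiL
          exact_mod_cast by omega
        have hju : (0 : ℤ) ≤ ((segSupport P x (maxSegIdx P x u)).idxOf u : ℤ) := by positivity
        have hmul : ((maxSegIdx P x v : ℤ) + 2) * n ≤ ((maxSegIdx P x u : ℤ) + 1) * n := by
          have h3 : (maxSegIdx P x v : ℤ) + 2 ≤ (maxSegIdx P x u : ℤ) + 1 := by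
            exact_mod_cast by omega
          exact mul_le_mul_of_nonneg_right h3 (by positivity)
        nlinarith
    · have hvx0 : v ≠ x 0 := by
        intro h
        exact hv (h ▸ x0_mem_stair P x)
      have hdist : G.dist v (x 0) ≠ 0 :=
        SimpleGraph.dist_ne_zero_iff_ne_and_reachable.mpr ⟨hvx0, hG.preconnected v (x 0)⟩
      obtain ⟨p, hp⟩ := SimpleGraph.exists_walk_of_dist_ne_zero hdist
      obtain ⟨w, hadj, q, rfl⟩ := SimpleGraph.Walk.exists_eq_cons_of_ne hvx0 p
      have hdw : G.dist w (x 0) ≤ q.length := SimpleGraph.dist_le q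
      have hlen : q.length + 1 = G.dist v (x 0) := by
        simpa [SimpleGraph.Walk.length_cons] using hp
      have hle := hmin w hadj.symm
      rw [fS_of_not_mem P x hv] at hle
      by_cases hw : w ∈ stairSupportFrom P x 0
      · rw [fS_of_mem P x hw] at hle
        have h1 : (0 : ℤ) ≤ ((maxSegIdx P x w : ℤ) + 1) * n := by positivity
        have h2 : (1 : ℤ) ≤ (G.dist v (x 0) : ℤ) := by exact_mod_cast Nat.one_le_iff_ne_zero.mpr hdist
        have h3 : (0 : ℤ) ≤ ((segSupport P x (maxSegIdx P x w)).idxOf w : ℤ) := by positivity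
        linarith
      · rw [fS_of_not_mem P x hw] at hle
        have hle' : G.dist v (x 0) ≤ G.dist w (x 0) := by exact_mod_cast hle
        omega
  · rintro rfl
    intro u hadj
    have hmem : x (Fin.last L) ∈ segSupport P x (L - 1) := by
      have h1 := end_mem_seg P x (i := L - 1) (by omega) (by omega)
      have h2 : x ⟨L - 1 + 1, by omega⟩ = x ⟨L, by omega⟩ := xcongr x _ _ (by omega)
      rw [h2] at h1
      exact h1
    have hstair : x (Fin.last L) ∈ stairSupportFrom P x 0 :=
      (mem_stair_iff P x hL0).mpr ⟨L - 1, by omega, hmem⟩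
    have hmax : maxSegIdx P x (x (Fin.last L)) = L - 1 := by
      have h1 := (maxSegIdx_spec P x hstair hL0).1
      have h2 := le_maxSegIdx P x (show L - 1 < L by omega) hmem
      omega
    have hlen1 : 0 < (segSupport P x (L - 1)).length := by
      rw [seg_eq P x (by omega) (by omega) (by omega)]
      exact List.length_pos_iff.mpr (SimpleGraph.Walk.support_ne_nil _)
    have hidxv : (segSupport P x (L - 1)).idxOf (x (Fin.last L))
        = (segSupport P x (L - 1)).length - 1 := by
      rw [seg_eq P x (by omega) (by omega) (by omega),
        xcongr x (hj := by omega) (h := show L - 1 + 1 = L by omega)]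
      exact walk_indexOf_last (P.path _ _) (P.isPath _ _)
    rw [fS_of_mem P x hstair, hmax]
    by_cases hu : u ∈ stairSupportFrom P x 0
    · rw [fS_of_mem P x hu]
      obtain ⟨huL, huseg⟩ := maxSegIdx_spec P x hu hL0
      rcases eq_or_lt_of_le (show maxSegIdx P x u ≤ L - 1 by omega) with hEq | hLt
      · rw [hEq] at huseg ⊢
        have h1 := indexOf_lt_len P x (show L - 1 < L by omega) huseg
        have h2 : (segSupport P x (L - 1)).idxOf u
            ≤ (segSupport P x (L - 1)).idxOf (x (Fin.last L)) := by omega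
        have h3 : ((segSupport P x (L - 1)).idxOf u : ℤ)
            ≤ ((segSupport P x (L - 1)).idxOf (x (Fin.last L)) : ℤ) := by exact_mod_cast h2
        linarith
      · have hju : ((segSupport P x (maxSegIdx P x u)).idxOf u : ℤ) + 1 ≤ n := by
          have h1 := indexOf_lt_len P x huL huseg
          have h2 := seg_len_le P x huL
          exact_mod_cast by omega
        have hjv : (0 : ℤ) ≤ ((segSupport P x (L - 1)).idxOf (x (Fin.last L)) : ℤ) := by
          positivity
        have hLL : ((L - 1 : ℕ) : ℤ) = (L : ℤ) - 1 := by
          have : 1 ≤ L := by omega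
          push_cast [this]
          ring
        have hmul : ((maxSegIdx P x u : ℤ) + 1) * n ≤ (((L - 1 : ℕ) : ℤ)) * n := by
          have h3 : (maxSegIdx P x u : ℤ) + 1 ≤ ((L - 1 : ℕ) : ℤ) := by
            exact_mod_cast by omega
          exact mul_le_mul_of_nonneg_right h3 (by positivity)
        nlinarith
    · rw [fS_of_not_mem P x hu]
      have h1 : (0 : ℤ) ≤ (((L - 1 : ℕ) : ℤ) + 1) * n := by positivity
      have h2 : (0 : ℤ) ≤ (G.dist u (x 0) : ℤ) := by positivity
      have h3 : (0 : ℤ) ≤ ((segSupport P x (L - 1)).idxOf (x (Fin.last L)) : ℤ) := by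
        positivity
      linarith
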